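/- Let a ∈ ℝ, m > 0, and for r > |a| let r̃ be the positive root of r̃⁴ − (r²−a²)r̃² − a²z² = 0 with r² = x²+y²+z². Define H = m r̃³/(r̃⁴ + a²z²). Then |H − m/r| ≤ C m (m+|a|)² / r³ for r ≥ 2(m+|a|), for some universal constant C; in particular H = m/r + O(r⁻³) as r → ∞. -/

import Mathlib

set_option maxHeartbeats 1600000 in
/-- Asymptotic expansion of the Kerr-Schild potential: there is a universal
constant `C > 0` such that for all mass `m > 0`, spin `a`, and points with
Euclidean radius `r ≥ 2(m+|a|)`, the potential `H = m r̃³/(r̃⁴ + a²z²)` satisfies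
`|H − m/r| ≤ C m (m+|a|)² / r³`. -/
theorem kerr_schild_potential_expansion :
    ∃ C : ℝ, 0 < C ∧ ∀ m a x y z rt : ℝ, 0 < m →
      2 * (m + |a|) ≤ Real.sqrt (x ^ 2 + y ^ 2 + z ^ 2) → 0 < rt →
      rt ^ 4 - ((x ^ 2 + y ^ 2 + z ^ 2) - a ^ 2) * rt ^ 2 - a ^ 2 * z ^ 2 = 0 →
      |m * rt ^ 3 / (rt ^ 4 + a ^ 2 * z ^ 2) - m / Real.sqrt (x ^ 2 + y ^ 2 + z ^ 2)| ≤
        C * m * (m + |a|) ^ 2 / Real.sqrt (x ^ 2 + y ^ 2 + z ^ 2) ^ 3 := by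
  refine ⟨3, by norm_num, ?_⟩
  intro m a x y z rt hm hr2 hrt heq
  set r := Real.sqrt (x ^ 2 + y ^ 2 + z ^ 2) with hrdef
  have hs : (0:ℝ) ≤ x ^ 2 + y ^ 2 + z ^ 2 := by positivity
  have hr2sq : r ^ 2 = x ^ 2 + y ^ 2 + z ^ 2 := Real.sq_sqrt hs
  have habs : 0 ≤ |a| := abs_nonneg a
  have hrpos : 0 < r := lt_of_lt_of_le (by linarith) hr2
  have ha2 : a ^ 2 ≤ r ^ 2 / 4 := by
    have h2a : 2 * |a| ≤ r := by linarith
    nlinarith [sq_abs a]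
  have hz : z ^ 2 ≤ r ^ 2 := by nlinarith [sq_nonneg x, sq_nonneg y]
  have heq' : rt ^ 4 - (r ^ 2 - a ^ 2) * rt ^ 2 - a ^ 2 * z ^ 2 = 0 := by
    rw [hr2sq]; exact heq
  have hrt2le : rt ^ 2 ≤ r ^ 2 := by
    nlinarith [sq_nonneg a, mul_pos hrt hrt,
      mul_nonneg (sq_nonneg a) (sub_nonneg.2 hz)]
  have hrt2ge : r ^ 2 - a ^ 2 ≤ rt ^ 2 := by
    nlinarith [mul_pos hrt hrt, sq_nonneg (a * z)]
  have hrtler : rt ≤ r := by nlinarith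
  set D : ℝ := 2 * rt ^ 2 - r ^ 2 + a ^ 2 with hDdef
  have hDpos : 0 < D := by
    have : r ^ 2 - a ^ 2 ≤ D := by simp only [hDdef]; linarith
    nlinarith [pow_pos hrpos 2]
  have hDge : 3 / 4 * r ^ 2 ≤ D := by simp only [hDdef]; linarith
  have hD : rt ^ 4 + a ^ 2 * z ^ 2 = rt ^ 2 * D := by
    simp only [hDdef]; linear_combination -heq'
  have hH : m * rt ^ 3 / (rt ^ 4 + a ^ 2 * z ^ 2) = m * rt / D := by
    rw [hD]
    field_simp
  have hkey : m * rt / D - m / r = m * (rt * r - D) / (D * r) := by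
    field_simp
  rw [hH, hkey]
  have hrtr : 0 ≤ rt * (r - rt) := mul_nonneg hrt.le (by linarith)
  have hrr : 0 ≤ r * (r - rt) := mul_nonneg hrpos.le (by linarith)
  have hN : |rt * r - D| ≤ 2 * a ^ 2 := by
    rw [abs_le]
    constructor
    · simp only [hDdef]; linarith [hrtr, hrt2le]
    · simp only [hDdef]; linarith [hrr, hrt2ge]
  have hma : a ^ 2 ≤ (m + |a|) ^ 2 := by nlinarith [sq_abs a]
  have habsval : |m * (rt * r - D) / (D * r)| = m * |rt * r - D| / (D * r) := by
    rw [abs_div, abs_mul, abs_of_pos hm, abs_of_pos (mul_pos hDpos hrpos)]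
  rw [habsval, div_le_div_iff₀ (mul_pos hDpos hrpos) (pow_pos hrpos 3)]
  have hDr : 3 / 4 * r ^ 3 ≤ D * r := by
    nlinarith [mul_le_mul_of_nonneg_right hDge hrpos.le]
  have hfin1 : m * |rt * r - D| * r ^ 3 ≤ 2 * m * a ^ 2 * r ^ 3 := by
    nlinarith [mul_le_mul_of_nonneg_right (mul_le_mul_of_nonneg_left hN hm.le)
      (pow_pos hrpos 3).le]
  have hfin2 : 2 * m * a ^ 2 * r ^ 3 ≤ 2 * m * (m + |a|) ^ 2 * r ^ 3 := by
    nlinarith [mul_le_mul_of_nonneg_left hma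
      (show (0:ℝ) ≤ 2 * m * r ^ 3 by positivity)]
  have hfin3 : 2 * m * (m + |a|) ^ 2 * r ^ 3 ≤ 3 * m * (m + |a|) ^ 2 * (D * r) := by
    nlinarith [mul_le_mul_of_nonneg_left hDr
      (show (0:ℝ) ≤ 3 * m * (m + |a|) ^ 2 by positivity),
      mul_nonneg (mul_nonneg hm.le (sq_nonneg (m + |a|))) (pow_pos hrpos 3).le]
  linarith
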